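/- arXiv:0707.1849 — 2 statements merged into one kernel-verified Lean document; each statement's English description precedes it below -/
import Mathlib

section
/- For any complex number z = a - i·θ·b with a ≥ 0, b ∈ ℝ, |b| ≤ a, and θ > 0, one has (1/(1+θ²)) · 1/(1+a) < Re(1/(1+z)) ≤ 1/(1+a). -/
open Complex

/-- For z = a - i·θ·b with a ≥ 0, |b| ≤ a, θ > 0:
    (1/(1+θ²))·1/(1+a) < Re(1/(1+z)) ≤ 1/(1+a). -/
theorem stmt0 (a b θ : ℝ) (ha : 0 ≤ a) (hb : |b| ≤ a) (hθ : 0 < θ) :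
    (1 / (1 + θ ^ 2)) * (1 / (1 + a)) < (1 / (1 + ((a : ℂ) - I * θ * b))).re ∧
      (1 / (1 + ((a : ℂ) - I * θ * b))).re ≤ 1 / (1 + a) := by
  have h1a : (0:ℝ) < 1 + a := by linarith
  have hre : (1 / (1 + ((a : ℂ) - I * θ * b))).re
      = (1 + a) / ((1 + a) ^ 2 + (θ * b) ^ 2) := by
    rw [one_div, Complex.inv_re, Complex.normSq_apply]
    simp
    ring
  have hb2 : b ^ 2 ≤ a ^ 2 := by
    have := _root_.sq_abs b ▸ pow_le_pow_left₀ (abs_nonneg b) hb 2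
    simpa [_root_.sq_abs] using this
  have hden : (0:ℝ) < (1 + a) ^ 2 + (θ * b) ^ 2 := by positivity
  rw [hre]
  constructor
  · rw [show (1:ℝ)/(1+θ^2)*(1/(1+a)) = 1/((1+θ^2)*(1+a)) by rw [one_div, one_div, one_div, ← mul_inv],
      div_lt_div_iff₀ (by positivity) hden]
    have hθ2 : (0:ℝ) < θ ^ 2 := by positivity
    have : (θ * b) ^ 2 < θ ^ 2 * (1 + a) ^ 2 := by
      have : b ^ 2 < (1 + a) ^ 2 := by nlinarith
      nlinarith
    nlinarith [sq_nonneg (1 + a), mul_pos (mul_pos (by positivity : (0:ℝ) < 1 + θ^2) h1a) h1a]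
  · rw [div_le_div_iff₀ hden h1a]
    nlinarith [sq_nonneg (θ * b)]
end

section
/- Let α ∈ (0,1), θ = tan(απ/2), and for ξ ∈ ℝ^N define Ψ(ξ) = Σ_{l=1}^N |ξ_l|^α − i·θ·Σ_{l=1}^N |ξ_l|^α·sgn(ξ_l). Then there exist constants 0 < A₁ ≤ A₂ < ∞ (depending only on α and N) such that for all ξ ∈ ℝ^N: A₁·(1/(1+|ξ|^α))^N ≤ [Re(1/(1+Ψ(ξ)))]^N ≤ A₂·(1/(1+|ξ|^α))^N. -/
open Real Complex

set_option maxHeartbeats 1000000 in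
/-- Two-sided bound for the N-th power of the real part of 1/(1+Ψ(ξ)), where Ψ is the
    Lévy exponent of a component of the saturated additive α-stable subordinator. -/
theorem stmt2 (α : ℝ) (hα : α ∈ Set.Ioo (0 : ℝ) 1) (N : ℕ) (hN : 1 ≤ N) :
    ∃ A₁ A₂ : ℝ, 0 < A₁ ∧ A₁ ≤ A₂ ∧
      ∀ ξ : EuclideanSpace ℝ (Fin N),
        A₁ * (1 / (1 + ‖ξ‖ ^ α)) ^ N ≤
            ((1 / (1 + (((∑ l, |ξ l| ^ α : ℝ) : ℂ) -
              Complex.I * (Real.tan (α * π / 2) : ℝ) *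
                ((∑ l, |ξ l| ^ α * Real.sign (ξ l) : ℝ) : ℂ)))).re) ^ N ∧
          ((1 / (1 + (((∑ l, |ξ l| ^ α : ℝ) : ℂ) -
              Complex.I * (Real.tan (α * π / 2) : ℝ) *
                ((∑ l, |ξ l| ^ α * Real.sign (ξ l) : ℝ) : ℂ)))).re) ^ N ≤
            A₂ * (1 / (1 + ‖ξ‖ ^ α)) ^ N := by
  obtain ⟨hα0, hα1⟩ := hα
  set θ : ℝ := Real.tan (α * π / 2) with hθdef
  have hN0 : (0:ℝ) < N := by exact_mod_cast hN
  have hN1 : (1:ℝ) ≤ N := by exact_mod_cast hN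
  have hθsq : (0:ℝ) < 1 + θ^2 := by positivity
  refine ⟨(1/((1+θ^2) * N))^N, (N:ℝ)^N, by positivity, ?_, ?_⟩
  · apply pow_le_pow_left₀ (by positivity)
    calc 1/((1+θ^2)*N) ≤ 1 := by
          rw [div_le_one (by positivity)]; nlinarith
      _ ≤ N := hN1
  intro ξ
  set S : ℝ := ∑ l, |ξ l| ^ α with hSdef
  set T : ℝ := ∑ l, |ξ l| ^ α * Real.sign (ξ l) with hTdef
  have hS0 : 0 ≤ S := Finset.sum_nonneg fun l _ => Real.rpow_nonneg (abs_nonneg _) _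
  have hT : |T| ≤ S := by
    refine (Finset.abs_sum_le_sum_abs _ _).trans (Finset.sum_le_sum ?_)
    intro l _
    rw [abs_mul]
    have h1 : |Real.sign (ξ l)| ≤ 1 := by
      rcases lt_trichotomy (ξ l) 0 with h | h | h
      · rw [Real.sign_of_neg h]; norm_num
      · rw [h, Real.sign_zero]; norm_num
      · rw [Real.sign_of_pos h]; norm_num
    calc |(|ξ l| ^ α)| * |Real.sign (ξ l)| ≤ |(|ξ l| ^ α)| * 1 :=
          mul_le_mul_of_nonneg_left h1 (abs_nonneg _)
      _ = |ξ l| ^ α := by rw [mul_one, _root_.abs_of_nonneg (Real.rpow_nonneg (abs_nonneg _) _)]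
  set u : ℝ := ‖ξ‖ ^ α with hudef
  have hu0 : 0 ≤ u := Real.rpow_nonneg (norm_nonneg _) _
  -- coordinate bound
  have hcoord : ∀ l, |ξ l| ≤ ‖ξ‖ := by
    intro l
    rw [EuclideanSpace.norm_eq, ← Real.sqrt_sq_eq_abs]
    apply Real.sqrt_le_sqrt
    have := Finset.single_le_sum (f := fun i => ‖ξ i‖^2)
      (fun i _ => sq_nonneg _) (Finset.mem_univ l)
    simpa [Real.norm_eq_abs, sq_abs] using this
  -- S ≤ N * u
  have hSu : S ≤ N * u := by
    calc S ≤ ∑ _l : Fin N, ‖ξ‖ ^ α :=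
          Finset.sum_le_sum fun l _ =>
            Real.rpow_le_rpow (abs_nonneg _) (hcoord l) hα0.le
      _ = N * u := by simp [hudef, mul_comm]
  -- u ≤ N * S
  have huS : u ≤ N * S := by
    obtain ⟨l₀, -, hmax⟩ := Finset.exists_max_image Finset.univ (fun l => |ξ l|)
      (Finset.univ_nonempty_iff.mpr (Fin.pos_iff_nonempty.mp (Nat.pos_of_ne_zero (by omega))))
    set M : ℝ := |ξ l₀|
    have hM0 : 0 ≤ M := abs_nonneg _
    have hnorm : ‖ξ‖ ≤ Real.sqrt N * M := by
      rw [EuclideanSpace.norm_eq]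
      have h1 : (∑ i, ‖ξ i‖^2) ≤ N * M^2 := by
        calc (∑ i, ‖ξ i‖^2) ≤ ∑ _i : Fin N, M^2 := by
              refine Finset.sum_le_sum fun i _ => ?_
              rw [Real.norm_eq_abs]
              exact pow_le_pow_left₀ (abs_nonneg _) (hmax i (Finset.mem_univ i)) 2
          _ = N * M^2 := by simp
      calc Real.sqrt (∑ i, ‖ξ i‖^2) ≤ Real.sqrt (N * M^2) := Real.sqrt_le_sqrt h1
        _ = Real.sqrt N * M := by
            rw [Real.sqrt_mul (by positivity), Real.sqrt_sq hM0]
    have hsqrt1 : (1:ℝ) ≤ Real.sqrt N := by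
      rw [show (1:ℝ) = Real.sqrt 1 by simp]; exact Real.sqrt_le_sqrt hN1
    have h2 : u ≤ (Real.sqrt N)^α * M^α := by
      rw [← Real.mul_rpow (by positivity) hM0]
      exact Real.rpow_le_rpow (norm_nonneg _) hnorm hα0.le
    have h3 : (Real.sqrt N : ℝ)^α ≤ N := by
      calc (Real.sqrt N : ℝ)^α ≤ (Real.sqrt N : ℝ)^(1:ℝ) :=
            Real.rpow_le_rpow_of_exponent_le hsqrt1 hα1.le
        _ = Real.sqrt N := Real.rpow_one _
        _ ≤ N := (Real.sqrt_le_left hN0.le).mpr (by nlinarith)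
    have h4 : M^α ≤ S :=
      Finset.single_le_sum (f := fun l => |ξ l|^α)
        (fun l _ => Real.rpow_nonneg (abs_nonneg _) _) (Finset.mem_univ l₀)
    calc u ≤ (Real.sqrt N)^α * M^α := h2
      _ ≤ N * S := mul_le_mul h3 h4 (Real.rpow_nonneg hM0 _) hN0.le
  -- real part formula
  have hre : (1 / (1 + ((S : ℂ) - Complex.I * (θ:ℝ) * (T:ℂ)))).re
      = (1 + S) / ((1+S)^2 + θ^2*T^2) := by
    rw [Complex.div_re, Complex.normSq_apply]
    simp
    ring
  rw [hre]
  set D : ℝ := (1+S)^2 + θ^2*T^2 with hDdef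
  have hD1 : (1+S)^2 ≤ D := by nlinarith [sq_nonneg (θ*T)]
  have hD2 : D ≤ (1+θ^2)*(1+S)^2 := by
    have hT2 : T^2 ≤ S^2 := by
      have := pow_le_pow_left₀ (abs_nonneg T) hT 2
      simpa [_root_.sq_abs] using this
    nlinarith [sq_nonneg θ]
  have hS1 : (0:ℝ) < 1 + S := by linarith
  have hu1 : (0:ℝ) < 1 + u := by linarith
  have hD0 : (0:ℝ) < D := by nlinarith
  have hSN : 1 + S ≤ N*(1+u) := by nlinarith
  have huN : 1 + u ≤ N*(1+S) := by nlinarith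
  have hlow : 1/((1+θ^2)*N) * (1/(1+u)) ≤ (1+S)/D := by
    rw [div_mul_div_comm, one_mul, div_le_div_iff₀ (by positivity) hD0]
    calc 1*D = D := one_mul D
      _ ≤ (1+θ^2)*(1+S)^2 := hD2
      _ = (1+S)*((1+θ^2)*(1+S)) := by ring
      _ ≤ (1+S)*((1+θ^2)*(N*(1+u))) :=
          mul_le_mul_of_nonneg_left (mul_le_mul_of_nonneg_left hSN (by positivity)) hS1.le
      _ = (1+S)*((1+θ^2)*N*(1+u)) := by ring
  have hhigh : (1+S)/D ≤ N * (1/(1+u)) := by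
    rw [mul_one_div, div_le_div_iff₀ hD0 hu1]
    calc (1+S)*(1+u) ≤ (1+S)*(N*(1+S)) := mul_le_mul_of_nonneg_left huN hS1.le
      _ = N*(1+S)^2 := by ring
      _ ≤ N*D := mul_le_mul_of_nonneg_left hD1 hN0.le
  constructor
  · calc (1/((1+θ^2)*N))^N * (1/(1+u))^N
        = (1/((1+θ^2)*N) * (1/(1+u)))^N := (mul_pow _ _ _).symm
      _ ≤ ((1+S)/D)^N := pow_le_pow_left₀ (by positivity) hlow N
  · calc ((1+S)/D)^N ≤ ((N:ℝ) * (1/(1+u)))^N :=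
        pow_le_pow_left₀ (by positivity) hhigh N
      _ = (N:ℝ)^N * (1/(1+u))^N := mul_pow _ _ _
end
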